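/- Let (T₁, …, Tₙ), n ≥ 2, be a 𝒰ₙ-twisted contraction on a Hilbert space H. Then there exist 2ⁿ pairwise orthogonal subspaces {H_A : A ⊆ {1,…,n}} (possibly trivial), each reducing every T_i, with H = ⊕_{A ⊆ {1,…,n}} H_A, such that for each A with H_A ≠ {0} and each i, the restriction T_i|_{H_A} is unitary if i ∉ A and completely non-unitary if i ∈ A; moreover this decomposition is unique. -/

import Mathlib

open ContinuousLinearMap

variable {H : Type*} [NormedAddCommGroup H] [InnerProductSpace ℂ H] [CompleteSpace H]

/-- A closed subspace `M` reduces the operator `T`. -/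
def Reduces (T : H →L[ℂ] H) (M : Submodule ℂ H) : Prop :=
  (∀ x ∈ M, T x ∈ M) ∧ (∀ x ∈ M, adjoint T x ∈ M)

/-- For a `T`-reducing subspace `M` of the contraction `T`, the restriction `T|_M` is unitary
iff `T` and `T*` are isometric on `M`. -/
def UnitaryOn (T : H →L[ℂ] H) (M : Submodule ℂ H) : Prop :=
  ∀ h ∈ M, ‖T h‖ = ‖h‖ ∧ ‖adjoint T h‖ = ‖h‖

/-- For a `T`-reducing subspace `M`, the restriction `T|_M` is completely non-unitary iff
there is no nonzero `T`-reducing subspace of `M` on which `T` restricts to a unitary. -/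
def CnuOn (T : H →L[ℂ] H) (M : Submodule ℂ H) : Prop :=
  ∀ L : Submodule ℂ H, L ≤ M → Reduces T L → UnitaryOn T L → L = ⊥

set_option linter.unusedSectionVars false
set_option linter.unusedVariables false
set_option maxHeartbeats 1000000

open scoped InnerProductSpace

namespace Stmt19Aux

lemma self_adj_zero (P : H →L[ℂ] H) (hP : ∀ x y : H, ⟪P x, y⟫_ℂ = ⟪x, P y⟫_ℂ)
    (hpos : ∀ z : H, 0 ≤ (⟪P z, z⟫_ℂ).re) {x : H} (hx : (⟪P x, x⟫_ℂ).re = 0) : P x = 0 := by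
  by_contra hne
  have hy0 : (0:ℝ) < ‖P x‖ := norm_pos_iff.mpr hne
  have hy : (0:ℝ) < ‖P x‖ ^ 2 := by positivity
  set c : ℝ := (⟪P (P x), P x⟫_ℂ).re with hc
  have hc0 : 0 ≤ c := hpos _
  set t : ℝ := -(‖P x‖ ^ 2 / (c + 1)) with ht
  have hkey := hpos (x + (t : ℂ) • P x)
  have h2 : ⟪P (P x), x⟫_ℂ = ⟪P x, P x⟫_ℂ := hP _ _
  have h4 : ⟪P x, P x⟫_ℂ = ((‖P x‖ : ℂ) ^ 2) := inner_self_eq_norm_sq_to_K (P x)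
  have hexp : (⟪P (x + (t : ℂ) • P x), x + (t : ℂ) • P x⟫_ℂ).re
      = t * (2 * ‖P x‖ ^ 2) + t ^ 2 * c := by
    have h1 : P (x + (t : ℂ) • P x) = P x + (t : ℂ) • P (P x) := by
      rw [map_add, map_smul]
    rw [h1]
    simp only [inner_add_left, inner_add_right, inner_smul_left, inner_smul_right, h2, h4]
    simp [Complex.add_re, Complex.mul_re, Complex.conj_ofReal, hx, ← Complex.ofReal_pow]
    ring
  rw [hexp] at hkey
  have hcp : (0:ℝ) < c + 1 := by linarith
  rw [ht] at hkey
  have hmul := mul_le_mul_of_nonneg_left hkey (le_of_lt (by positivity : (0:ℝ) < (c+1)^2))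
  have hsimp : (c+1)^2 * (-(‖P x‖ ^ 2 / (c + 1)) * (2 * ‖P x‖ ^ 2)
      + (-(‖P x‖ ^ 2 / (c + 1))) ^ 2 * c) = -(‖P x‖^2 * ‖P x‖^2 * (c + 2)) := by
    field_simp
    ring
  rw [hsimp, mul_zero] at hmul
  nlinarith

lemma re_inner_self (x : H) : (⟪x, x⟫_ℂ).re = ‖x‖ ^ 2 := by
  rw [inner_self_eq_norm_sq_to_K]
  simp [← Complex.ofReal_pow]

lemma norm_eq_of_sq (a b : ℝ) (ha : 0 ≤ a) (hb : 0 ≤ b) (h : a ^ 2 = b ^ 2) : a = b := by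
  nlinarith

lemma contract_isometry_iff (A : H →L[ℂ] H) (hA : ∀ h : H, ‖A h‖ ≤ ‖h‖) (x : H) :
    ‖A x‖ = ‖x‖ ↔ adjoint A (A x) = x := by
  constructor
  · intro h
    have key := self_adj_zero (1 - adjoint A * A)
      (fun u v => by
        simp only [sub_apply, one_apply_eq_self, mul_apply_eq_comp, inner_sub_left, inner_sub_right,
          adjoint_inner_left, adjoint_inner_right])
      (fun z => by
        simp only [sub_apply, one_apply_eq_self, mul_apply_eq_comp, inner_sub_left, adjoint_inner_left,
          Complex.sub_re, re_inner_self]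
        have := hA z
        nlinarith [norm_nonneg (A z), norm_nonneg z])
      (x := x)
      (by
        simp only [sub_apply, one_apply_eq_self, mul_apply_eq_comp, inner_sub_left, adjoint_inner_left,
          Complex.sub_re, re_inner_self, h, sub_self])
    have h0 : x - adjoint A (A x) = 0 := by simpa [sub_apply, mul_apply_eq_comp] using key
    exact (sub_eq_zero.mp h0).symm
  · intro h
    have h1 : ⟪A x, A x⟫_ℂ = ⟪x, x⟫_ℂ := by
      rw [← adjoint_inner_left, h]
    have h2 : ‖A x‖ ^ 2 = ‖x‖ ^ 2 := by
      have := congrArg Complex.re h1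
      rwa [re_inner_self, re_inner_self] at this
    exact norm_eq_of_sq _ _ (norm_nonneg _) (norm_nonneg _) h2

noncomputable section
/-- The maximal subspace on which the contraction `S` acts unitarily. -/
def uniSp (S : H →L[ℂ] H) : Submodule ℂ H :=
  ⨅ k : ℕ, (LinearMap.ker (((adjoint S) ^ k * S ^ k - 1 : H →L[ℂ] H) : H →ₗ[ℂ] H)
    ⊓ LinearMap.ker ((S ^ k * (adjoint S) ^ k - 1 : H →L[ℂ] H) : H →ₗ[ℂ] H))

lemma mem_uniSp {S : H →L[ℂ] H} {x : H} :
    x ∈ uniSp S ↔ ∀ k : ℕ,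
      ((adjoint S) ^ k) ((S ^ k) x) = x ∧ (S ^ k) (((adjoint S) ^ k) x) = x := by
  simp only [uniSp, Submodule.mem_iInf, Submodule.mem_inf, LinearMap.mem_ker,
    ContinuousLinearMap.coe_coe, sub_apply, one_apply_eq_self, mul_apply_eq_comp, sub_eq_zero]

lemma isClosed_uniSp (S : H →L[ℂ] H) : IsClosed ((uniSp S : Set H)) := by
  have : ((uniSp S : Set H)) = ⋂ k : ℕ,
      ((LinearMap.ker (((adjoint S) ^ k * S ^ k - 1 : H →L[ℂ] H) : H →ₗ[ℂ] H) : Set H)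
        ∩ (LinearMap.ker ((S ^ k * (adjoint S) ^ k - 1 : H →L[ℂ] H) : H →ₗ[ℂ] H) : Set H)) := by
    simp [uniSp, Submodule.coe_iInf, Submodule.coe_inf]
  rw [this]
  exact isClosed_iInter fun k =>
    (ContinuousLinearMap.isClosed_ker _).inter (ContinuousLinearMap.isClosed_ker _)

lemma adjoint_pow (S : H →L[ℂ] H) (k : ℕ) : adjoint (S ^ k) = (adjoint S) ^ k := by
  rw [← star_eq_adjoint, ← star_eq_adjoint, star_pow]

lemma pow_contraction {S : H →L[ℂ] H} (hS : ∀ h : H, ‖S h‖ ≤ ‖h‖) (k : ℕ) (h : H) :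
    ‖(S ^ k) h‖ ≤ ‖h‖ := by
  induction k generalizing h with
  | zero => simp
  | succ m ih =>
    have : (S ^ (m + 1)) h = (S ^ m) (S h) := by rw [pow_succ, mul_apply_eq_comp]
    rw [this]
    exact le_trans (ih (S h)) (hS h)

lemma adjoint_contraction {S : H →L[ℂ] H} (hS : ∀ h : H, ‖S h‖ ≤ ‖h‖) (h : H) :
    ‖adjoint S h‖ ≤ ‖h‖ := by
  have hop : ‖S‖ ≤ 1 := opNorm_le_bound S zero_le_one (by simpa using hS)
  calc ‖adjoint S h‖ ≤ ‖adjoint S‖ * ‖h‖ := le_opNorm _ _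
    _ = ‖S‖ * ‖h‖ := by rw [LinearIsometryEquiv.norm_map adjoint S]
    _ ≤ 1 * ‖h‖ := by gcongr
    _ = ‖h‖ := one_mul _

lemma mem_uniSp_norm {S : H →L[ℂ] H} (hS : ∀ h : H, ‖S h‖ ≤ ‖h‖) {x : H} :
    x ∈ uniSp S ↔ ∀ k : ℕ, ‖(S ^ k) x‖ = ‖x‖ ∧ ‖((adjoint S) ^ k) x‖ = ‖x‖ := by
  rw [mem_uniSp]
  constructor
  · intro h k
    constructor
    · have h1 : ⟪(S ^ k) x, (S ^ k) x⟫_ℂ = ⟪x, x⟫_ℂ := by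
        rw [← adjoint_inner_left, adjoint_pow, (h k).1]
      have h2 := congrArg Complex.re h1
      rw [re_inner_self, re_inner_self] at h2
      exact norm_eq_of_sq _ _ (norm_nonneg _) (norm_nonneg _) h2
    · have h1 : ⟪((adjoint S) ^ k) x, ((adjoint S) ^ k) x⟫_ℂ = ⟪x, x⟫_ℂ := by
        rw [← adjoint_inner_left, adjoint_pow, adjoint_adjoint, (h k).2]
      have h2 := congrArg Complex.re h1
      rw [re_inner_self, re_inner_self] at h2
      exact norm_eq_of_sq _ _ (norm_nonneg _) (norm_nonneg _) h2
  · intro h k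
    constructor
    · have := (contract_isometry_iff (S ^ k) (pow_contraction hS k) x).mp (h k).1
      rwa [adjoint_pow] at this
    · have := (contract_isometry_iff ((adjoint S) ^ k)
        (pow_contraction (adjoint_contraction hS) k) x).mp (h k).2
      rwa [adjoint_pow, adjoint_adjoint] at this

lemma uniSp_adjoint (S : H →L[ℂ] H) : uniSp (adjoint S) = uniSp S := by
  ext x
  rw [mem_uniSp, mem_uniSp]
  constructor <;> intro h k <;>
    · have := h k
      rw [adjoint_adjoint] at *
      exact ⟨this.2, this.1⟩


-- ### basic consequences of membership in `uniSp`

lemma uniSp_adj_self {S : H →L[ℂ] H} {x : H} (hx : x ∈ uniSp S) :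
    adjoint S (S x) = x := by
  have := (mem_uniSp.mp hx 1)
  simpa [pow_one] using this.1

lemma uniSp_self_adj {S : H →L[ℂ] H} {x : H} (hx : x ∈ uniSp S) :
    S (adjoint S x) = x := by
  have := (mem_uniSp.mp hx 1)
  simpa [pow_one] using this.2

lemma uniSp_mem_smul {S : H →L[ℂ] H} (hS : ∀ h : H, ‖S h‖ ≤ ‖h‖)
    {x : H} (hx : x ∈ uniSp S) : S x ∈ uniSp S := by
  rw [mem_uniSp_norm hS] at hx ⊢
  intro k
  constructor
  · have h1 : (S ^ k) (S x) = (S ^ (k + 1)) x := by rw [pow_succ, mul_apply_eq_comp]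
    rw [h1, (hx (k + 1)).1, ← (hx 1).1, pow_one]
  · cases k with
    | zero => simp
    | succ m =>
      have h1 : ((adjoint S) ^ (m + 1)) (S x) = ((adjoint S) ^ m) (adjoint S (S x)) := by
        rw [pow_succ, mul_apply_eq_comp]
      have h2 : adjoint S (S x) = x := by
        have := (mem_uniSp.mp ((mem_uniSp_norm hS).mpr hx) 1)
        simpa [pow_one] using this.1
      rw [h1, h2, (hx m).2, ← (hx 1).1, pow_one]

lemma uniSp_reduces {S : H →L[ℂ] H} (hS : ∀ h : H, ‖S h‖ ≤ ‖h‖) :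
    Reduces S (uniSp S) := by
  constructor
  · intro x hx
    exact uniSp_mem_smul hS hx
  · intro x hx
    have h0 : x ∈ uniSp (adjoint S) := by rwa [uniSp_adjoint]
    have : adjoint S x ∈ uniSp (adjoint S) :=
      uniSp_mem_smul (adjoint_contraction hS) h0
    rwa [uniSp_adjoint] at this

lemma uniSp_unitaryOn {S : H →L[ℂ] H} (hS : ∀ h : H, ‖S h‖ ≤ ‖h‖) :
    UnitaryOn S (uniSp S) := by
  intro x hx
  have := (mem_uniSp_norm hS).mp hx 1
  simpa [pow_one] using this

lemma unitaryOn_mono {S : H →L[ℂ] H} {L M : Submodule ℂ H} (h : UnitaryOn S M)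
    (hle : L ≤ M) : UnitaryOn S L := fun x hx => h x (hle hx)

lemma le_uniSp {S : H →L[ℂ] H} (hS : ∀ h : H, ‖S h‖ ≤ ‖h‖) {L : Submodule ℂ H}
    (hred : Reduces S L) (hu : UnitaryOn S L) : L ≤ uniSp S := by
  intro x hx
  rw [mem_uniSp_norm hS]
  intro k
  have h1 : ∀ m : ℕ, (S ^ m) x ∈ L ∧ ‖(S ^ m) x‖ = ‖x‖ := by
    intro m
    induction m with
    | zero => simp [hx]
    | succ p ih =>
      have hstep : (S ^ (p + 1)) x = S ((S ^ p) x) := by rw [pow_succ', mul_apply_eq_comp]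
      refine ⟨by rw [hstep]; exact hred.1 _ ih.1, ?_⟩
      rw [hstep, (hu _ ih.1).1, ih.2]
  have h2 : ∀ m : ℕ, ((adjoint S) ^ m) x ∈ L ∧ ‖((adjoint S) ^ m) x‖ = ‖x‖ := by
    intro m
    induction m with
    | zero => simp [hx]
    | succ p ih =>
      have hstep : ((adjoint S) ^ (p + 1)) x = adjoint S (((adjoint S) ^ p) x) := by
        rw [pow_succ', mul_apply_eq_comp]
      refine ⟨by rw [hstep]; exact hred.2 _ ih.1, ?_⟩
      rw [hstep, (hu _ ih.1).2, ih.2]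
  exact ⟨(h1 k).2, (h2 k).2⟩

-- ### Reduces basics

lemma reduces_adjoint {S : H →L[ℂ] H} {M : Submodule ℂ H} (h : Reduces S M) :
    Reduces (adjoint S) M := by
  refine ⟨h.2, ?_⟩
  rw [adjoint_adjoint]
  exact h.1

lemma reduces_orth {S : H →L[ℂ] H} {M : Submodule ℂ H} (h : Reduces S M) :
    Reduces S Mᗮ := by
  constructor
  · intro x hx
    intro y hy
    rw [← adjoint_inner_left]
    exact hx _ (h.2 _ hy)
  · intro x hx
    intro y hy
    rw [← adjoint_adjoint S, adjoint_inner_right, adjoint_adjoint]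
    exact hx _ (h.1 _ hy)

lemma reduces_inf {S : H →L[ℂ] H} {M N : Submodule ℂ H} (hM : Reduces S M)
    (hN : Reduces S N) : Reduces S (M ⊓ N) :=
  ⟨fun x hx => ⟨hM.1 _ hx.1, hN.1 _ hx.2⟩, fun x hx => ⟨hM.2 _ hx.1, hN.2 _ hx.2⟩⟩

lemma reduces_top (S : H →L[ℂ] H) : Reduces S ⊤ := ⟨fun _ _ => trivial, fun _ _ => trivial⟩

lemma reduces_iInf {ι : Sort*} {S : H →L[ℂ] H} {M : ι → Submodule ℂ H}
    (h : ∀ i, Reduces S (M i)) : Reduces S (⨅ i, M i) := by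
  constructor
  · intro x hx
    rw [Submodule.mem_iInf] at hx ⊢
    exact fun i => (h i).1 _ (hx i)
  · intro x hx
    rw [Submodule.mem_iInf] at hx ⊢
    exact fun i => (h i).2 _ (hx i)

-- ### commuting operators preserve uniSp

lemma pointwise_pow_comm {S A : H →L[ℂ] H} (h : ∀ z, A (S z) = S (A z)) (k : ℕ) (z : H) :
    A ((S ^ k) z) = (S ^ k) (A z) := by
  induction k generalizing z with
  | zero => simp
  | succ m ih =>
    have h1 : (S ^ (m + 1)) z = (S ^ m) (S z) := by rw [pow_succ, mul_apply_eq_comp]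
    have h2 : (S ^ (m + 1)) (A z) = (S ^ m) (S (A z)) := by rw [pow_succ, mul_apply_eq_comp]
    rw [h1, h2, ih, h]

lemma uniSp_mem_of_comm {S A : H →L[ℂ] H} (h1 : ∀ z, A (S z) = S (A z))
    (h2 : ∀ z, A (adjoint S z) = adjoint S (A z)) {x : H} (hx : x ∈ uniSp S) :
    A x ∈ uniSp S := by
  rw [mem_uniSp] at hx ⊢
  intro k
  constructor
  · have e1 : (S ^ k) (A x) = A ((S ^ k) x) := (pointwise_pow_comm h1 k x).symm
    rw [e1, ← pointwise_pow_comm h2 k, (hx k).1]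
  · have e1 : ((adjoint S) ^ k) (A x) = A (((adjoint S) ^ k) x) :=
      (pointwise_pow_comm h2 k x).symm
    rw [e1, ← pointwise_pow_comm h1 k, (hx k).2]

-- ### orthogonal projections onto closed subspaces

def projOf (K : Submodule ℂ H) (h : IsClosed (K : Set H)) : H →L[ℂ] H :=
  haveI : CompleteSpace K := h.completeSpace_coe
  K.subtypeL ∘L K.orthogonalProjectionOnto

lemma projOf_mem (K : Submodule ℂ H) (h : IsClosed (K : Set H)) (x : H) :
    projOf K h x ∈ K := by
  haveI : CompleteSpace K := h.completeSpace_coe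
  exact (K.orthogonalProjectionOnto x).2

lemma projOf_eq_self (K : Submodule ℂ H) (h : IsClosed (K : Set H)) {x : H} (hx : x ∈ K) :
    projOf K h x = x := by
  haveI : CompleteSpace K := h.completeSpace_coe
  exact Submodule.starProjection_eq_self_iff.mpr hx

lemma sub_projOf_mem_orth (K : Submodule ℂ H) (h : IsClosed (K : Set H)) (x : H) :
    x - projOf K h x ∈ Kᗮ := by
  haveI : CompleteSpace K := h.completeSpace_coe
  exact Submodule.sub_starProjection_mem_orthogonal (K := K) x

lemma projOf_eq_zero (K : Submodule ℂ H) (h : IsClosed (K : Set H)) {x : H} (hx : x ∈ Kᗮ) :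
    projOf K h x = 0 := by
  haveI : CompleteSpace K := h.completeSpace_coe
  have := Submodule.orthogonalProjectionOnto_apply_of_mem_orthogonal (K := K) hx
  simp only [projOf, ContinuousLinearMap.comp_apply, this]
  rfl

lemma projOf_inner (K : Submodule ℂ H) (h : IsClosed (K : Set H)) (x y : H) :
    ⟪projOf K h x, y⟫_ℂ = ⟪x, projOf K h y⟫_ℂ := by
  haveI : CompleteSpace K := h.completeSpace_coe
  exact Submodule.inner_starProjection_left_eq_right K x y

lemma projOf_comm {K : Submodule ℂ H} (h : IsClosed (K : Set H)) {S : H →L[ℂ] H}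
    (hred : Reduces S K) (x : H) : projOf K h (S x) = S (projOf K h x) := by
  have h1 : S (projOf K h x) ∈ K := hred.1 _ (projOf_mem K h x)
  have h2 : S x - S (projOf K h x) ∈ Kᗮ := by
    have h3 : x - projOf K h x ∈ Kᗮ := sub_projOf_mem_orth K h x
    have := (reduces_orth hred).1 _ h3
    rwa [map_sub] at this
  have hdecomp : S x = S (projOf K h x) + (S x - S (projOf K h x)) := by abel
  calc projOf K h (S x)
      = projOf K h (S (projOf K h x)) + projOf K h (S x - S (projOf K h x)) := by
        rw [← map_add, ← hdecomp]
    _ = S (projOf K h x) + 0 := by rw [projOf_eq_self K h h1, projOf_eq_zero K h h2]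
    _ = S (projOf K h x) := add_zero _

/-- the projection onto a subspace reducing `S` and `adjoint S` preserves `uniSp S`. -/
lemma projOf_mem_uniSp {K : Submodule ℂ H} (h : IsClosed (K : Set H)) {S : H →L[ℂ] H}
    (hred : Reduces S K) {x : H} (hx : x ∈ uniSp S) : projOf K h x ∈ uniSp S :=
  uniSp_mem_of_comm (fun z => projOf_comm h hred z)
    (fun z => projOf_comm h (reduces_adjoint hred) z) hx

lemma projOf_mem_orth_of_inv {K N : Submodule ℂ H} (h : IsClosed (K : Set H))
    (hinv : ∀ y ∈ N, projOf K h y ∈ N) {x : H} (hx : x ∈ Nᗮ) : projOf K h x ∈ Nᗮ := by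
  intro y hy
  rw [← projOf_inner]
  exact hx _ (hinv _ hy)

-- ### twisted commutation

lemma comm_conj {A V : H →L[ℂ] H} (hV1 : adjoint V * V = 1) (hV2 : V * adjoint V = 1)
    (h : A * V = V * A) : A * adjoint V = adjoint V * A := by
  calc A * adjoint V = (adjoint V * V) * (A * adjoint V) := by rw [hV1, one_mul]
    _ = adjoint V * ((V * A) * adjoint V) := by simp only [mul_assoc]
    _ = adjoint V * ((A * V) * adjoint V) := by rw [h]
    _ = (adjoint V * A) * (V * adjoint V) := by simp only [mul_assoc]
    _ = adjoint V * A := by rw [hV2, mul_one]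

lemma pow_twist {S B V : H →L[ℂ] H} (h1 : S * B = V * (B * S)) (hSV : S * V = V * S)
    (k : ℕ) : S ^ k * B = V ^ k * (B * S ^ k) := by
  induction k with
  | zero => simp
  | succ m ih =>
    have hcomm : S * V ^ m = V ^ m * S := ((Commute.pow_right hSV m)).symm ▸ rfl
    calc S ^ (m + 1) * B = S * (S ^ m * B) := by rw [pow_succ', mul_assoc]
      _ = S * (V ^ m * (B * S ^ m)) := by rw [ih]
      _ = (S * V ^ m) * (B * S ^ m) := by rw [mul_assoc]
      _ = (V ^ m * S) * (B * S ^ m) := by rw [(Commute.pow_right hSV m).eq]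
      _ = V ^ m * ((S * B) * S ^ m) := by simp only [mul_assoc]
      _ = V ^ m * ((V * (B * S)) * S ^ m) := by rw [h1]
      _ = V ^ (m + 1) * (B * S ^ (m + 1)) := by
          rw [pow_succ V m, pow_succ' S m]
          simp only [mul_assoc]

lemma pow_unit_cancel {V : H →L[ℂ] H} (hV1 : adjoint V * V = 1) (hV2 : V * adjoint V = 1)
    (k : ℕ) : V ^ k * (adjoint V) ^ k = 1 ∧ (adjoint V) ^ k * V ^ k = 1 := by
  have hcomm : Commute V (adjoint V) := by
    unfold Commute SemiconjBy
    rw [hV2, hV1]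
  constructor
  · rw [← hcomm.mul_pow, hV2, one_pow]
  · rw [← (hcomm.symm).mul_pow, hV1, one_pow]

/-- main twisted-invariance lemma: if `S * B = V * B * S` (and the adjoint variant), with `V`
unitary commuting with `S`, then `B` preserves `uniSp S`. -/
lemma twisted_mem {S B V : H →L[ℂ] H}
    (hV1 : adjoint V * V = 1) (hV2 : V * adjoint V = 1)
    (h1 : S * B = V * (B * S))
    (h2 : adjoint S * B = adjoint V * (B * adjoint S))
    (h4 : S * V = V * S)
    {x : H} (hx : x ∈ uniSp S) : B x ∈ uniSp S := by
  -- derived commutations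
  have h4s : adjoint S * adjoint V = adjoint V * adjoint S := by
    have := congrArg star h4
    simpa [star_mul, star_eq_adjoint] using this.symm
  have hSVs : S * adjoint V = adjoint V * S := comm_conj hV1 hV2 h4
  have hSsV : adjoint S * V = V * adjoint S := by
    have hVa1 : adjoint (adjoint V) * adjoint V = 1 := by rw [adjoint_adjoint]; exact hV2
    have hVa2 : adjoint V * adjoint (adjoint V) = 1 := by rw [adjoint_adjoint]; exact hV1
    have := comm_conj hVa1 hVa2 (A := adjoint S) h4s
    rwa [adjoint_adjoint] at this
  -- E_k commutes with B
  have hE : ∀ k : ℕ, ((adjoint S) ^ k * S ^ k) * B = B * ((adjoint S) ^ k * S ^ k) := by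
    intro k
    have e1 : S ^ k * B = V ^ k * (B * S ^ k) := pow_twist h1 h4 k
    have e2 : (adjoint S) ^ k * B = (adjoint V) ^ k * (B * (adjoint S) ^ k) :=
      pow_twist h2 h4s k
    have e3 : (adjoint S) ^ k * V ^ k = V ^ k * (adjoint S) ^ k :=
      (Commute.pow_pow hSsV k k)
    calc ((adjoint S) ^ k * S ^ k) * B = (adjoint S) ^ k * (S ^ k * B) := by
          simp only [mul_assoc]
      _ = (adjoint S) ^ k * (V ^ k * (B * S ^ k)) := by rw [e1]
      _ = ((adjoint S) ^ k * V ^ k) * (B * S ^ k) := by rw [mul_assoc]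
      _ = (V ^ k * (adjoint S) ^ k) * (B * S ^ k) := by rw [e3]
      _ = V ^ k * (((adjoint S) ^ k * B) * S ^ k) := by simp only [mul_assoc]
      _ = V ^ k * (((adjoint V) ^ k * (B * (adjoint S) ^ k)) * S ^ k) := by rw [e2]
      _ = (V ^ k * (adjoint V) ^ k) * (B * ((adjoint S) ^ k * S ^ k)) := by
          simp only [mul_assoc]
      _ = B * ((adjoint S) ^ k * S ^ k) := by
          rw [(pow_unit_cancel hV1 hV2 k).1, one_mul]
  have hF : ∀ k : ℕ, (S ^ k * (adjoint S) ^ k) * B = B * (S ^ k * (adjoint S) ^ k) := by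
    intro k
    have e1 : S ^ k * B = V ^ k * (B * S ^ k) := pow_twist h1 h4 k
    have e2 : (adjoint S) ^ k * B = (adjoint V) ^ k * (B * (adjoint S) ^ k) :=
      pow_twist h2 h4s k
    have e3 : S ^ k * (adjoint V) ^ k = (adjoint V) ^ k * S ^ k :=
      (Commute.pow_pow hSVs k k)
    calc (S ^ k * (adjoint S) ^ k) * B = S ^ k * ((adjoint S) ^ k * B) := by
          simp only [mul_assoc]
      _ = S ^ k * ((adjoint V) ^ k * (B * (adjoint S) ^ k)) := by rw [e2]
      _ = (S ^ k * (adjoint V) ^ k) * (B * (adjoint S) ^ k) := by rw [mul_assoc]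
      _ = ((adjoint V) ^ k * S ^ k) * (B * (adjoint S) ^ k) := by rw [e3]
      _ = (adjoint V) ^ k * ((S ^ k * B) * (adjoint S) ^ k) := by simp only [mul_assoc]
      _ = (adjoint V) ^ k * ((V ^ k * (B * S ^ k)) * (adjoint S) ^ k) := by rw [e1]
      _ = ((adjoint V) ^ k * V ^ k) * (B * (S ^ k * (adjoint S) ^ k)) := by
          simp only [mul_assoc]
      _ = B * (S ^ k * (adjoint S) ^ k) := by
          rw [(pow_unit_cancel hV1 hV2 k).2, one_mul]
  rw [mem_uniSp] at hx ⊢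
  intro k
  constructor
  · have := congrArg (fun (C : H →L[ℂ] H) => C x) (hE k)
    simp only [mul_apply_eq_comp] at this
    rw [this, (hx k).1]
  · have := congrArg (fun (C : H →L[ℂ] H) => C x) (hF k)
    simp only [mul_apply_eq_comp] at this
    rw [this, (hx k).2]

-- ### biorthogonality from an orthogonal decomposition

lemma inner_self_bot {M : Submodule ℂ H} {x : H} (h1 : x ∈ M) (h2 : x ∈ Mᗮ) : x = 0 := by
  have := h2 x h1
  rwa [inner_self_eq_zero] at this

lemma biorth {ι : Type*} (K : ι → Submodule ℂ H)
    (horth : ∀ A B, A ≠ B → Submodule.IsOrtho (K A) (K B))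
    (hsup : (⨆ A, K A) = ⊤) (A : ι) : (K A)ᗮᗮ = K A := by
  refine le_antisymm ?_ (Submodule.le_orthogonal_orthogonal _)
  have htop : (⊤ : Submodule ℂ H) ≤ K A ⊔ (K A)ᗮ := by
    rw [← hsup]
    refine iSup_le fun B => ?_
    by_cases hAB : B = A
    · subst hAB; exact le_sup_left
    · exact le_trans (Submodule.isOrtho_iff_le.mp (horth B A hAB)) le_sup_right
  intro x hx
  obtain ⟨a, ha, b, hb, hab⟩ := Submodule.mem_sup.mp (htop trivial : x ∈ K A ⊔ (K A)ᗮ)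
  have hb0 : b = 0 := by
    have hbmem : b ∈ (K A)ᗮᗮ := by
      have : b = x - a := by rw [← hab]; abel
      rw [this]
      exact Submodule.sub_mem _ hx (Submodule.le_orthogonal_orthogonal _ ha)
    exact inner_self_bot hb hbmem
  rw [← hab, hb0, add_zero]
  exact ha

end
end Stmt19Aux

open Stmt19Aux

theorem stmt19 (n : ℕ) (hn : 2 ≤ n)
    (T : Fin n → (H →L[ℂ] H)) (U : Fin n → Fin n → (H →L[ℂ] H))
    (hUunit : ∀ i j, i ≠ j → adjoint (U i j) ∘L U i j = 1 ∧ U i j ∘L adjoint (U i j) = 1)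
    (hUadj : ∀ i j, i ≠ j → U j i = adjoint (U i j))
    (hUcomm : ∀ i j k l, Commute (U i j) (U k l))
    (hTcon : ∀ i, ∀ h : H, ‖T i h‖ ≤ ‖h‖)
    (htw1 : ∀ i j, i ≠ j → T i ∘L T j = U i j ∘L (T j ∘L T i))
    (htw2 : ∀ i j, i ≠ j → adjoint (T i) ∘L T j = adjoint (U i j) ∘L (T j ∘L adjoint (T i)))
    (htw3 : ∀ k i j, i ≠ j → T k ∘L U i j = U i j ∘L T k) :
    ∃ Hsp : Finset (Fin n) → Submodule ℂ H,
      (∀ A B, A ≠ B → Submodule.IsOrtho (Hsp A) (Hsp B)) ∧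
      (⨆ A : Finset (Fin n), Hsp A) = ⊤ ∧
      (∀ A, ∀ i, Reduces (T i) (Hsp A)) ∧
      (∀ A, ∀ i, i ∉ A → UnitaryOn (T i) (Hsp A)) ∧
      (∀ A, ∀ i, i ∈ A → CnuOn (T i) (Hsp A)) ∧
      -- uniqueness
      (∀ K : Finset (Fin n) → Submodule ℂ H,
        (∀ A B, A ≠ B → Submodule.IsOrtho (K A) (K B)) →
        (⨆ A : Finset (Fin n), K A) = ⊤ →
        (∀ A, ∀ i, Reduces (T i) (K A)) →
        (∀ A, ∀ i, i ∉ A → UnitaryOn (T i) (K A)) →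
        (∀ A, ∀ i, i ∈ A → CnuOn (T i) (K A)) →
        ∀ A, K A = Hsp A) := by
  classical
  -- hypotheses in `*`-form
  have hU1 : ∀ i j, i ≠ j → adjoint (U i j) * U i j = 1 := fun i j h => (hUunit i j h).1
  have hU2 : ∀ i j, i ≠ j → U i j * adjoint (U i j) = 1 := fun i j h => (hUunit i j h).2
  have hm1 : ∀ i j, i ≠ j → T i * T j = U i j * (T j * T i) := htw1
  have hm2 : ∀ i j, i ≠ j → adjoint (T i) * T j = adjoint (U i j) * (T j * adjoint (T i)) := htw2
  have hm3 : ∀ k i j, i ≠ j → T k * U i j = U i j * T k := htw3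
  -- `adjoint (T k)` commutes with each `U i j`
  have hTsU : ∀ k i j, i ≠ j → adjoint (T k) * U i j = U i j * adjoint (T k) := by
    intro k i j hij
    have e : adjoint (T k) * adjoint (U i j) = adjoint (U i j) * adjoint (T k) := by
      have e0 := congrArg star (hm3 k i j hij)
      simp only [star_mul, star_eq_adjoint] at e0
      exact e0.symm
    have hVa1 : adjoint (adjoint (U i j)) * adjoint (U i j) = 1 := by
      rw [adjoint_adjoint]; exact hU2 i j hij
    have hVa2 : adjoint (U i j) * adjoint (adjoint (U i j)) = 1 := by
      rw [adjoint_adjoint]; exact hU1 i j hij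
    have := comm_conj hVa1 hVa2 e
    rwa [adjoint_adjoint] at this
  -- the twisted relations R3 and R4
  have hR3 : ∀ i j, i ≠ j →
      T i * adjoint (T j) = adjoint (U i j) * (adjoint (T j) * T i) := by
    intro i j hij
    have e : adjoint (T j) * T i = U i j * (T i * adjoint (T j)) := by
      have e0 := hm2 j i (Ne.symm hij)
      rwa [hUadj i j hij, adjoint_adjoint] at e0
    calc T i * adjoint (T j)
        = (adjoint (U i j) * U i j) * (T i * adjoint (T j)) := by rw [hU1 i j hij, one_mul]
      _ = adjoint (U i j) * (U i j * (T i * adjoint (T j))) := by rw [mul_assoc]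
      _ = adjoint (U i j) * (adjoint (T j) * T i) := by rw [← e]
  have hR4 : ∀ i j, i ≠ j →
      adjoint (T i) * adjoint (T j) = U i j * (adjoint (T j) * adjoint (T i)) := by
    intro i j hij
    have e : T j * T i = adjoint (U i j) * (T i * T j) := by
      have e0 := hm1 j i (Ne.symm hij)
      rwa [hUadj i j hij] at e0
    have e2 : adjoint (T i) * adjoint (T j) = (adjoint (T j) * adjoint (T i)) * U i j := by
      have e0 := congrArg star e
      simp only [star_mul, star_eq_adjoint, adjoint_adjoint, mul_assoc] at e0
      rw [e0, mul_assoc]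
    calc adjoint (T i) * adjoint (T j)
        = (adjoint (T j) * adjoint (T i)) * U i j := e2
      _ = adjoint (T j) * (adjoint (T i) * U i j) := by rw [mul_assoc]
      _ = adjoint (T j) * (U i j * adjoint (T i)) := by rw [hTsU i i j hij]
      _ = (adjoint (T j) * U i j) * adjoint (T i) := by rw [mul_assoc]
      _ = (U i j * adjoint (T j)) * adjoint (T i) := by rw [hTsU j i j hij]
      _ = U i j * (adjoint (T j) * adjoint (T i)) := by rw [mul_assoc]
  -- the unitary subspaces
  set W : Fin n → Submodule ℂ H := fun i => uniSp (T i) with hWdef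
  have hWclosed : ∀ i, IsClosed ((W i : Set H)) := fun i => isClosed_uniSp (T i)
  have hRed : ∀ i j, Reduces (T j) (W i) := by
    intro i j
    by_cases hij : i = j
    · subst hij; exact uniSp_reduces (hTcon i)
    · constructor
      · intro x hx
        exact twisted_mem (hU1 i j hij) (hU2 i j hij) (hm1 i j hij) (hm2 i j hij)
          (hm3 i i j hij) hx
      · intro x hx
        have hVa1 : adjoint (adjoint (U i j)) * adjoint (U i j) = 1 := by
          rw [adjoint_adjoint]; exact hU2 i j hij
        have hVa2 : adjoint (U i j) * adjoint (adjoint (U i j)) = 1 := by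
          rw [adjoint_adjoint]; exact hU1 i j hij
        have h2' : adjoint (T i) * adjoint (T j)
            = adjoint (adjoint (U i j)) * (adjoint (T j) * adjoint (T i)) := by
          rw [adjoint_adjoint]; exact hR4 i j hij
        have h4' : T i * adjoint (U i j) = adjoint (U i j) * T i :=
          comm_conj (hU1 i j hij) (hU2 i j hij) (hm3 i i j hij)
        exact twisted_mem hVa1 hVa2 (hR3 i j hij) h2' h4' hx
  -- projections onto the unitary subspaces preserve all `W j` and `(W j)ᗮ`
  have hPW : ∀ i j, ∀ x ∈ W j, projOf (W i) (hWclosed i) x ∈ W j := by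
    intro i j x hx
    exact projOf_mem_uniSp (hWclosed i) (hRed i j) hx
  have hPWo : ∀ i j, ∀ x ∈ (W j)ᗮ, projOf (W i) (hWclosed i) x ∈ (W j)ᗮ := by
    intro i j x hx
    exact projOf_mem_orth_of_inv (hWclosed i) (hPW i j) hx
  -- the candidate decomposition
  set Vs : Finset (Fin n) → Fin n → Submodule ℂ H :=
    fun A i => if i ∈ A then (W i)ᗮ else W i with hVsdef
  set Hsp : Finset (Fin n) → Submodule ℂ H :=
    fun A => ⨅ i ∈ (Finset.univ : Finset (Fin n)), Vs A i with hHspdef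
  have hmemHsp : ∀ A (x : H), x ∈ Hsp A ↔ ∀ i, x ∈ Vs A i := by
    intro A x
    simp [hHspdef, Submodule.mem_iInf]
  have hVsW : ∀ A i, i ∉ A → Vs A i = W i := by
    intro A i hi; simp [hVsdef, hi]
  have hVsWo : ∀ A i, i ∈ A → Vs A i = (W i)ᗮ := by
    intro A i hi; simp [hVsdef, hi]
  have hHspleW : ∀ A i, i ∉ A → Hsp A ≤ W i := by
    intro A i hi x hx
    have := (hmemHsp A x).1 hx i
    rwa [hVsW A i hi] at this
  have hHspleWo : ∀ A i, i ∈ A → Hsp A ≤ (W i)ᗮ := by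
    intro A i hi x hx
    have := (hmemHsp A x).1 hx i
    rwa [hVsWo A i hi] at this
  -- pairwise orthogonality
  have hOrtho : ∀ A B, A ≠ B → Submodule.IsOrtho (Hsp A) (Hsp B) := by
    intro A B hAB
    have hex : ∃ i, ¬(i ∈ A ↔ i ∈ B) := by
      by_contra hc
      push_neg at hc
      exact hAB (Finset.ext fun i => hc i)
    obtain ⟨i, hi⟩ := hex
    by_cases h1 : i ∈ A
    · have h2 : i ∉ B := fun h => hi ⟨fun _ => h, fun _ => h1⟩
      rw [Submodule.isOrtho_iff_le]
      exact le_trans (hHspleWo A i h1) (Submodule.orthogonal_le (hHspleW B i h2))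
    · have h2 : i ∈ B := by
        by_contra h2
        exact hi ⟨fun h => absurd h h1, fun h => absurd h h2⟩
      rw [Submodule.isOrtho_iff_le]
      refine le_trans (hHspleW A i h1) ?_
      refine le_trans (Submodule.le_orthogonal_orthogonal (W i)) ?_
      exact Submodule.orthogonal_le (hHspleWo B i h2)
  -- each `Hsp A` reduces every `T i`
  have hVsRed : ∀ A j i, Reduces (T i) (Vs A j) := by
    intro A j i
    by_cases hj : j ∈ A
    · rw [hVsWo A j hj]; exact reduces_orth (hRed j i)
    · rw [hVsW A j hj]; exact hRed j i
  have hHspRed : ∀ A i, Reduces (T i) (Hsp A) := by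
    intro A i
    exact reduces_iInf fun j => reduces_iInf fun _ => hVsRed A j i
  -- unitarity off `A`
  have hHspUni : ∀ A i, i ∉ A → UnitaryOn (T i) (Hsp A) := by
    intro A i hi
    exact unitaryOn_mono (uniSp_unitaryOn (hTcon i)) (hHspleW A i hi)
  -- complete non-unitarity on `A`
  have hHspCnu : ∀ A i, i ∈ A → CnuOn (T i) (Hsp A) := by
    intro A i hi L hL hLred hLuni
    have h1 : L ≤ W i := le_uniSp (hTcon i) hLred hLuni
    have h2 : L ≤ (W i)ᗮ := le_trans hL (hHspleWo A i hi)
    rw [eq_bot_iff]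
    intro x hx
    have hx0 : x = 0 := inner_self_bot (h1 hx) (h2 hx)
    rw [hx0]
    exact Submodule.zero_mem ⊥
  -- the projections preserve each `Vs A i`
  have hPVs : ∀ j A i, ∀ x ∈ Vs A i, projOf (W j) (hWclosed j) x ∈ Vs A i := by
    intro j A i x hx
    by_cases hiA : i ∈ A
    · rw [hVsWo A i hiA] at hx ⊢
      exact hPWo j i x hx
    · rw [hVsW A i hiA] at hx ⊢
      exact hPW j i x hx
  -- the subspaces fill the whole space
  have hSup : (⨆ A : Finset (Fin n), Hsp A) = ⊤ := by
    rw [eq_top_iff]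
    have key : ∀ s : Finset (Fin n),
        (⊤ : Submodule ℂ H) ≤ ⨆ A : Finset (Fin n), ⨅ i ∈ s, Vs A i := by
      intro s
      induction s using Finset.induction_on with
      | empty =>
        refine le_trans ?_ (le_iSup (fun A => ⨅ i ∈ (∅ : Finset (Fin n)), Vs A i)
          (∅ : Finset (Fin n)))
        simp
      | @insert j s hj ih =>
        refine le_trans ih (iSup_le fun A => ?_)
        intro x hx
        simp only [Submodule.mem_iInf] at hx
        set p := projOf (W j) (hWclosed j) x with hpdef
        have hmem1 : p ∈ ⨅ i ∈ insert j s, Vs (A.erase j) i := by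
          simp only [Submodule.mem_iInf]
          intro i hi
          rcases Finset.mem_insert.mp hi with heq | his
          · rw [heq, hVsW (A.erase j) j (Finset.notMem_erase j A)]
            exact projOf_mem _ _ x
          · have hij : i ≠ j := fun h => hj (h ▸ his)
            have hVeq : Vs (A.erase j) i = Vs A i := by
              by_cases hiA : i ∈ A
              · rw [hVsWo _ i (Finset.mem_erase.mpr ⟨hij, hiA⟩), hVsWo A i hiA]
              · rw [hVsW _ i (fun hc => hiA (Finset.mem_erase.mp hc).2), hVsW A i hiA]
            rw [hVeq]
            exact hPVs j A i x (hx i his)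
        have hmem2 : x - p ∈ ⨅ i ∈ insert j s, Vs (insert j A) i := by
          simp only [Submodule.mem_iInf]
          intro i hi
          rcases Finset.mem_insert.mp hi with heq | his
          · rw [heq, hVsWo (insert j A) j (Finset.mem_insert_self j A)]
            exact sub_projOf_mem_orth _ _ x
          · have hij : i ≠ j := fun h => hj (h ▸ his)
            have hVeq : Vs (insert j A) i = Vs A i := by
              by_cases hiA : i ∈ A
              · rw [hVsWo _ i (Finset.mem_insert_of_mem hiA), hVsWo A i hiA]
              · rw [hVsW _ i (fun hc => (Finset.mem_insert.mp hc).elim hij hiA),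
                  hVsW A i hiA]
            rw [hVeq]
            exact Submodule.sub_mem _ (hx i his) (hPVs j A i x (hx i his))
        have hx' : x ∈ (⨅ i ∈ insert j s, Vs (A.erase j) i)
            ⊔ (⨅ i ∈ insert j s, Vs (insert j A) i) :=
          Submodule.mem_sup.mpr ⟨p, hmem1, x - p, hmem2, by abel⟩
        exact (sup_le
          (le_iSup (fun B => ⨅ i ∈ insert j s, Vs B i) (A.erase j))
          (le_iSup (fun B => ⨅ i ∈ insert j s, Vs B i) (insert j A))) hx'
    exact key Finset.univ
  refine ⟨Hsp, hOrtho, hSup, hHspRed, hHspUni, hHspCnu, ?_⟩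
  -- uniqueness
  intro K hKorth hKsup hKred hKuni hKcnu
  have hKbi : ∀ B, (K B)ᗮᗮ = K B := biorth K hKorth hKsup
  have hKclosed : ∀ B, IsClosed ((K B : Set H)) := by
    intro B
    rw [← hKbi B]
    exact ((K B)ᗮ).isClosed_orthogonal
  have hKle : ∀ B, K B ≤ Hsp B := by
    intro B
    have hKW : ∀ i, i ∉ B → K B ≤ W i := fun i hi =>
      le_uniSp (hTcon i) (hKred B i) (hKuni B i hi)
    have hKWo : ∀ i, i ∈ B → K B ≤ (W i)ᗮ := by
      intro i hi
      have hQW : ∀ w ∈ W i, projOf (K B) (hKclosed B) w ∈ W i := fun w hw =>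
        projOf_mem_uniSp (hKclosed B) (hKred B i) hw
      have hLbot : K B ⊓ W i = ⊥ :=
        hKcnu B i hi (K B ⊓ W i) inf_le_left
          (reduces_inf (hKred B i) (uniSp_reduces (hTcon i)))
          (unitaryOn_mono (uniSp_unitaryOn (hTcon i)) inf_le_right)
      intro z hz
      rw [Submodule.mem_orthogonal]
      intro w hw
      have hQw0 : projOf (K B) (hKclosed B) w = 0 := by
        have hmem : projOf (K B) (hKclosed B) w ∈ K B ⊓ W i :=
          ⟨projOf_mem _ _ w, hQW w hw⟩
        rw [hLbot] at hmem
        simpa using hmem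
      have hsplit : (⟪w, z⟫_ℂ) = ⟪projOf (K B) (hKclosed B) w, z⟫_ℂ
          + ⟪w - projOf (K B) (hKclosed B) w, z⟫_ℂ := by
        rw [← inner_add_left, add_sub_cancel]
      have hterm1 : ⟪projOf (K B) (hKclosed B) w, z⟫_ℂ = 0 := by
        rw [hQw0]; exact inner_zero_left z
      have hterm2 : ⟪w - projOf (K B) (hKclosed B) w, z⟫_ℂ = 0 :=
        inner_eq_zero_symm.mp ((sub_projOf_mem_orth (K B) (hKclosed B) w) z hz)
      rw [hsplit, hterm1, hterm2, add_zero]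
    intro x hx
    rw [hmemHsp]
    intro i
    by_cases hiA : i ∈ B
    · rw [hVsWo B i hiA]; exact hKWo i hiA hx
    · rw [hVsW B i hiA]; exact hKW i hiA hx
  intro A
  refine le_antisymm (hKle A) ?_
  have htop : (⊤ : Submodule ℂ H) ≤ K A ⊔ (Hsp A)ᗮ := by
    rw [← hKsup]
    refine iSup_le fun B => ?_
    by_cases hB : B = A
    · subst hB; exact le_sup_left
    · refine le_trans ?_ le_sup_right
      exact le_trans (hKle B) (Submodule.isOrtho_iff_le.mp (hOrtho B A hB))
  intro x hx
  obtain ⟨a, ha, b, hb, hab⟩ := Submodule.mem_sup.mp (htop (Submodule.mem_top) :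
    x ∈ K A ⊔ (Hsp A)ᗮ)
  have hbA : b ∈ Hsp A := by
    have hba : b = x - a := by rw [← hab]; abel
    rw [hba]
    exact Submodule.sub_mem _ hx (hKle A ha)
  have hb0 : b = 0 := inner_self_bot hbA hb
  rw [← hab, hb0, add_zero]
  exact ha
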